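/- Suppose uₖ, vₖ : Ω → ℝ are measurable, 0 ≤ uₖ ≤ U₀, 0 ≤ vₖ ≤ V₀, uₖ → u and vₖ → v almost everywhere on a finite measure space Ω, and there is a constant C with ∫_Ω k·uₖ·vₖ dμ ≤ C for all k > 0. Then u·v = 0 almost everywhere on Ω. -/
import Mathlib


open MeasureTheory

theorem stmt_12 {Ω : Type*} [MeasurableSpace Ω] (μ : Measure Ω) [IsFiniteMeasure μ]
    (U₀ V₀ C : ℝ) (hU₀ : 0 < U₀) (hV₀ : 0 < V₀) (hC : 0 < C)
    (u v : ℝ → Ω → ℝ) (ulim vlim : Ω → ℝ)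
    (humeas : ∀ k, Measurable (u k)) (hvmeas : ∀ k, Measurable (v k))
    (hub : ∀ k > (0:ℝ), ∀ x, u k x ∈ Set.Icc (0:ℝ) U₀)
    (hvb : ∀ k > (0:ℝ), ∀ x, v k x ∈ Set.Icc (0:ℝ) V₀)
    (huconv : ∀ᵐ x ∂μ, Filter.Tendsto (fun k => u k x) Filter.atTop (nhds (ulim x)))
    (hvconv : ∀ᵐ x ∂μ, Filter.Tendsto (fun k => v k x) Filter.atTop (nhds (vlim x)))
    (hbound : ∀ k > (0:ℝ), ∫ x, k * u k x * v k x ∂μ ≤ C) :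
    ∀ᵐ x ∂μ, ulim x * vlim x = 0 := by
  -- indexing sequence
  have ht : Filter.Tendsto (fun n : ℕ => (n : ℝ) + 1) Filter.atTop Filter.atTop :=
    Filter.tendsto_atTop_add_const_right _ 1 tendsto_natCast_atTop_atTop
  have hpos : ∀ n : ℕ, (0:ℝ) < (n : ℝ) + 1 := fun n => by positivity
  set F : ℕ → Ω → ℝ := fun n x => u ((n:ℝ)+1) x * v ((n:ℝ)+1) x with hF
  -- a.e. convergence of F to ulim * vlim
  have hconv : ∀ᵐ x ∂μ, Filter.Tendsto (fun n => F n x) Filter.atTop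
      (nhds (ulim x * vlim x)) := by
    filter_upwards [huconv, hvconv] with x hu hv
    exact (hu.comp ht).mul (hv.comp ht)
  -- bound on |F n x|
  have habs : ∀ n x, ‖F n x‖ ≤ U₀ * V₀ := by
    intro n x
    have h1 := hub _ (hpos n) x
    have h2 := hvb _ (hpos n) x
    rw [Real.norm_eq_abs, abs_of_nonneg (mul_nonneg h1.1 h2.1)]
    exact mul_le_mul h1.2 h2.2 h2.1 (le_of_lt hU₀)
  have hFmeas : ∀ n, Measurable (F n) := fun n => (humeas _).mul (hvmeas _)
  -- dominated convergence
  have hint : Filter.Tendsto (fun n => ∫ x, F n x ∂μ) Filter.atTop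
      (nhds (∫ x, ulim x * vlim x ∂μ)) := by
    refine tendsto_integral_of_dominated_convergence (fun _ => U₀ * V₀)
      (fun n => (hFmeas n).aestronglyMeasurable) (integrable_const _)
      (fun n => Filter.Eventually.of_forall (habs n)) hconv
  -- the integrals go to 0
  have hzero : Filter.Tendsto (fun n => ∫ x, F n x ∂μ) Filter.atTop (nhds 0) := by
    have hle : ∀ n : ℕ, ∫ x, F n x ∂μ ≤ C / ((n:ℝ)+1) := by
      intro n
      have hb := hbound _ (hpos n)
      have : ∫ x, ((n:ℝ)+1) * u ((n:ℝ)+1) x * v ((n:ℝ)+1) x ∂μ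
          = ((n:ℝ)+1) * ∫ x, F n x ∂μ := by
        rw [← integral_const_mul]
        congr 1; ext x; ring
      rw [this] at hb
      rw [le_div_iff₀ (hpos n), mul_comm]
      exact hb
    have hge : ∀ n : ℕ, (0:ℝ) ≤ ∫ x, F n x ∂μ := fun n =>
      integral_nonneg fun x => mul_nonneg (hub _ (hpos n) x).1 (hvb _ (hpos n) x).1
    have hCn : Filter.Tendsto (fun n : ℕ => C / ((n:ℝ)+1)) Filter.atTop (nhds 0) :=
      Filter.Tendsto.div_atTop tendsto_const_nhds ht
    exact tendsto_of_tendsto_of_tendsto_of_le_of_le tendsto_const_nhds hCn hge hle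
  have hieq : ∫ x, ulim x * vlim x ∂μ = 0 := tendsto_nhds_unique hint hzero
  -- nonnegativity of the limit a.e.
  have hnn : ∀ᵐ x ∂μ, 0 ≤ ulim x * vlim x := by
    filter_upwards [huconv, hvconv] with x hu hv
    have h1 : 0 ≤ ulim x := by
      refine ge_of_tendsto hu ?_
      filter_upwards [Filter.eventually_gt_atTop 0] with k hk
      exact (hub k hk x).1
    have h2 : 0 ≤ vlim x := by
      refine ge_of_tendsto hv ?_
      filter_upwards [Filter.eventually_gt_atTop 0] with k hk
      exact (hvb k hk x).1
    exact mul_nonneg h1 h2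
  -- integrability of the limit
  have haesm : AEStronglyMeasurable (fun x => ulim x * vlim x) μ :=
    aestronglyMeasurable_of_tendsto_ae _ (fun n => (hFmeas n).aestronglyMeasurable) hconv
  have hintg : Integrable (fun x => ulim x * vlim x) μ := by
    refine ⟨haesm, ?_⟩
    apply HasFiniteIntegral.of_bounded (C := U₀ * V₀)
    filter_upwards [hconv] with x hx
    exact le_of_tendsto' (hx.norm) fun n => habs n x
  have := (integral_eq_zero_iff_of_nonneg_ae hnn hintg).mp hieq
  filter_upwards [this] with x hx using hx
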